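/- arXiv:2008.04996 — 2 statements merged into one kernel-verified Lean document; each statement's English description precedes it below -/
import Mathlib

section
/- Every perfect tree T ⊆ 2^{<ω} contains a good perfect subtree T' ⊆ T, where a perfect tree is good iff for any two splitting nodes s, t, if s precedes t in the canonical depth-lexicographic ordering of splitting nodes then |s| ≤ |t|. -/
/-- A tree in `2^{<ω}`: a set of finite binary sequences closed under initial segments. -/
def IsTree (T : Set (List Bool)) : Prop :=
  ∀ s t : List Bool, t ∈ T → s <+: t → s ∈ T

/-- `t` is a splitting node of `T`. -/
def splitNode (T : Set (List Bool)) (t : List Bool) : Prop :=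
  t ∈ T ∧ t ++ [false] ∈ T ∧ t ++ [true] ∈ T

/-- A perfect (Sacks) tree: nonempty tree in which every node extends to a splitting node. -/
def PerfectTree (T : Set (List Bool)) : Prop :=
  T.Nonempty ∧ IsTree T ∧ ∀ t ∈ T, ∃ s, t <+: s ∧ splitNode T s

/-- A Silver (uniform) tree. -/
def SilverTree (T : Set (List Bool)) : Prop :=
  PerfectTree T ∧ ∀ s ∈ T, ∀ t ∈ T, s.length = t.length →
    ∀ i : Bool, (s ++ [i] ∈ T ↔ t ++ [i] ∈ T)

/-- The first `n` values of `x : 2^ω` as a finite sequence. -/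
def seqTake (x : ℕ → Bool) (n : ℕ) : List Bool := List.ofFn (fun i : Fin n => x i)

/-- The body `[T]` of a tree: the set of its infinite branches. -/
def body (T : Set (List Bool)) : Set (ℕ → Bool) := {x | ∀ n, seqTake x n ∈ T}

/-- Two finite sequences are comparable (compatible). -/
def comparable (s t : List Bool) : Prop := s <+: t ∨ t <+: s

/-- Terminal nodes of a (finite) tree: nodes with no proper extension in the tree. -/
def Term (p : Set (List Bool)) : Set (List Bool) := {s ∈ p | ∀ t ∈ p, s <+: t → s = t}

/-- The restriction `T|n = {t ∈ T : |t| ≤ n}`. -/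
def restrict (T : Set (List Bool)) (n : ℕ) : Set (List Bool) := {t ∈ T | t.length ≤ n}


open Classical in
/-- The trace of a node `s` along the splitting nodes of `T` strictly below it:
the values of `s` at the splitting positions. Under the canonical isomorphism
`e : Split(T) → 2^{<ω}`, this is `e(s)` for splitting nodes `s`. -/
noncomputable def splitTrace (T : Set (List Bool)) (s : List Bool) : List Bool :=
  ((List.range s.length).filter (fun k => decide (splitNode T (s.take k)))).map
    (fun k => s.getD k false)

/-- Lexicographic order on `2^{<ω}` (with `false < true`). -/
def lexLe (a b : List Bool) : Prop := a = b ∨ List.Lex (· < ·) a b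

/-- The canonical depth-lexicographic order `s ≼ t` on splitting nodes:
`|e(s)| < |e(t)|`, or `|e(s)| = |e(t)|` and `e(s) ≤_lex e(t)`. -/
noncomputable def preceq (T : Set (List Bool)) (s t : List Bool) : Prop :=
  (splitTrace T s).length < (splitTrace T t).length ∨
    ((splitTrace T s).length = (splitTrace T t).length ∧
      lexLe (splitTrace T s) (splitTrace T t))

/-- A tree is good iff the depth-lexicographic order on its splitting nodes
respects lengths. -/
noncomputable def GoodTree (T : Set (List Bool)) : Prop :=
  ∀ s t : List Bool, splitNode T s → splitNode T t → preceq T s t → s.length ≤ t.length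


namespace GoodAux

/-! ### List helpers -/

lemma prefix_snoc_of_proper {s t : List Bool} (h : s <+: t) (hne : s ≠ t) :
    ∃ x, s ++ [x] <+: t := by
  obtain ⟨r, rfl⟩ := h
  cases r with
  | nil => simp at hne
  | cons y r => exact ⟨y, ⟨r, by simp⟩⟩

lemma snoc_prefix_unique {s : List Bool} {x y : Bool} {t : List Bool}
    (hx : s ++ [x] <+: t) (hy : s ++ [y] <+: t) : x = y := by
  have h1 := List.prefix_of_prefix_length_le hx hy (by simp)
  have h2 := h1.eq_of_length (by simp)
  simpa using h2

lemma prefix_getD {s t : List Bool} (h : s <+: t) {k : ℕ} (hk : k < s.length) :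
    t.getD k false = s.getD k false := by
  obtain ⟨r, rfl⟩ := h
  rw [List.getD_append _ _ _ _ hk]

lemma snoc_prefix_getD {s : List Bool} {b : Bool} {t : List Bool} (h : s ++ [b] <+: t) :
    t.getD s.length false = b := by
  have h1 : t.getD s.length false = (s ++ [b]).getD s.length false :=
    prefix_getD h (by simp)
  rw [h1, List.getD_append_right _ _ _ _ (le_refl _)]
  simp

lemma prefix_take_eq {s t : List Bool} (h : s <+: t) {k : ℕ} (hk : k ≤ s.length) :
    t.take k = s.take k := by
  obtain ⟨r, rfl⟩ := h
  rw [List.take_append, Nat.sub_eq_zero_of_le hk]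
  simp

lemma filter_range_shrink (p : ℕ → Bool) {a b : ℕ} (hab : a ≤ b)
    (h : ∀ k, k < b → p k = true → k < a) :
    (List.range b).filter p = (List.range a).filter p := by
  induction b, hab using Nat.le_induction with
  | base => rfl
  | succ b hb ih =>
      rw [List.range_succ, List.filter_append]
      have hpb : p b = false := by
        cases hp : p b
        · rfl
        · exact absurd (h b (by omega) hp) (by omega)
      rw [List.filter_cons, hpb]
      simp only [Bool.false_eq_true, if_false, List.filter_nil, List.append_nil]
      exact ih (fun k hk hpk => h k (by omega) hpk)

/-! ### Lex helpers -/

lemma lex_ne {a b : List Bool} (h : List.Lex (· < ·) a b) : a ≠ b := by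
  induction h with
  | nil => simp
  | cons h ih => intro e; exact ih (by injection e)
  | rel h =>
      intro e
      injection e with e1 _
      subst e1
      exact absurd h (lt_irrefl _)

lemma lex_asymm {a b : List Bool} (h1 : List.Lex (· < ·) a b)
    (h2 : List.Lex (· < ·) b a) : False := by
  induction h1 with
  | nil => cases h2
  | cons h ih =>
      cases h2 with
      | cons h2' => exact ih h2'
      | rel hr => exact absurd hr (lt_irrefl _)
  | rel hr =>
      cases h2 with
      | cons h2' => exact absurd hr (lt_irrefl _)
      | rel hr2 => exact absurd hr2 (lt_asymm hr)

lemma lex_append {a b : List Bool} (h : List.Lex (· < ·) a b)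
    (hl : a.length = b.length) (c d : List Bool) :
    List.Lex (· < ·) (a ++ c) (b ++ d) := by
  induction h with
  | nil => simp at hl
  | cons h ih =>
      simp only [List.cons_append]
      exact List.Lex.cons (ih (by simpa using hl))
  | rel h =>
      simp only [List.cons_append]
      exact List.Lex.rel h

lemma lex_snoc (s : List Bool) : List.Lex (· < ·) (s ++ [false]) (s ++ [true]) := by
  induction s with
  | nil => exact List.Lex.rel (by decide)
  | cons x s ih => simpa using List.Lex.cons (r := (· < ·)) (a := x) ih

/-! ### The index tree `g : ℕ → List Bool` (heap indexing of `2^{<ω}`) -/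

noncomputable def g : ℕ → List Bool
  | 0 => []
  | (n+1) => g (n/2) ++ [decide ((n+1) % 2 = 0)]
decreasing_by omega

lemma g_succ (n : ℕ) : g (n+1) = g (n/2) ++ [decide ((n+1) % 2 = 0)] := by
  rw [g]

lemma child_eq (n : ℕ) :
    2 * (n / 2) + 1 + cond (decide ((n+1) % 2 = 0)) 1 0 = n + 1 := by
  by_cases h : (n+1) % 2 = 0
  · rw [decide_eq_true h]; simp only [cond_true]; omega
  · rw [decide_eq_false h]; simp only [cond_false]; omega

lemma g_child (a : ℕ) (i : Bool) : g (2*a + 1 + cond i 1 0) = g a ++ [i] := by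
  cases i
  · have e : (2*a + 1 + cond false 1 0) = (2*a) + 1 := by simp
    rw [e, g_succ]
    have e1 : 2*a/2 = a := by omega
    have e2 : decide ((2*a+1) % 2 = 0) = false := decide_eq_false (by omega)
    rw [e1, e2]
  · have e : (2*a + 1 + cond true 1 0) = (2*a+1) + 1 := by simp
    rw [e, g_succ]
    have e1 : (2*a+1)/2 = a := by omega
    have e2 : (2*a+1+1) % 2 = 0 := by omega
    rw [e1, decide_eq_true e2]

lemma g_len_zero : (g 0).length = 0 := by rw [g]; rfl

lemma g_len_succ (n : ℕ) : (g (n+1)).length = (g (n/2)).length + 1 := by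
  rw [g_succ]; simp

lemma g_len_mono : ∀ n m, m ≤ n → (g m).length ≤ (g n).length := by
  intro n
  induction n using Nat.strong_induction_on with
  | _ n ih =>
    intro m hm
    match n, m with
    | n, 0 => rw [g]; simp
    | 0, (m+1) => omega
    | (n+1), (m+1) =>
        rw [g_len_succ, g_len_succ]
        have : m / 2 ≤ n / 2 := by omega
        have := ih (n/2) (by omega) (m/2) this
        omega

lemma g_lex : ∀ n m, m < n → (g m).length = (g n).length →
    List.Lex (· < ·) (g m) (g n) := by
  intro n
  induction n using Nat.strong_induction_on with
  | _ n ih =>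
    intro m hm hl
    match n, m, hm with
    | (n+1), 0, _ =>
        rw [g_len_zero, g_len_succ] at hl
        omega
    | (n+1), (m+1), hm =>
        have hpp : m / 2 ≤ n / 2 := by omega
        rcases eq_or_lt_of_le hpp with he | hlt
        · -- same parent
          have hm' := child_eq m
          have hn' := child_eq n
          rw [he] at hm'
          have hbits : cond (decide ((m+1) % 2 = 0)) 1 0 <
              cond (decide ((n+1) % 2 = 0)) 1 0 := by omega
          have hbm : decide ((m+1) % 2 = 0) = false := by
            cases h : decide ((m+1) % 2 = 0) <;>
              cases h2 : decide ((n+1) % 2 = 0) <;> rw [h, h2] at hbits <;>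
              simp at hbits <;> rfl
          have hbn : decide ((n+1) % 2 = 0) = true := by
            cases h : decide ((m+1) % 2 = 0) <;>
              cases h2 : decide ((n+1) % 2 = 0) <;> rw [h, h2] at hbits <;>
              simp at hbits <;> rfl
          rw [g_succ, g_succ, hbm, hbn, he]
          exact lex_snoc _
        · -- different parents
          rw [g_len_succ, g_len_succ] at hl
          have hlex := ih (n/2) (by omega) (m/2) hlt (by omega)
          rw [g_succ, g_succ]
          exact lex_append hlex (by omega) _ _

lemma g_len_eq_zero {m : ℕ} (h : (g m).length = 0) : m = 0 := by
  match m with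
  | 0 => rfl
  | (m+1) => rw [g_len_succ] at h; omega

lemma g_inj : ∀ {m n : ℕ}, g m = g n → m = n := by
  intro m n h
  have hl : (g m).length = (g n).length := by rw [h]
  rcases lt_trichotomy m n with hlt | he | hgt
  · exact absurd (h ▸ g_lex n m hlt hl) (fun hx => lex_ne hx rfl)
  · exact he
  · exact absurd (h ▸ g_lex m n hgt hl.symm) (fun hx => lex_ne hx rfl)

/-! ### Fusion: construction of `F` -/

lemma split_mem {T : Set (List Bool)} {s : List Bool} (h : splitNode T s) (b : Bool) :
    s ++ [b] ∈ T := by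
  cases b
  · exact h.2.1
  · exact h.2.2

lemma exists_split_ge (T : Set (List Bool)) (hT : PerfectTree T) :
    ∀ N, ∀ t ∈ T, ∃ s, t <+: s ∧ splitNode T s ∧ N ≤ s.length := by
  intro N
  induction N with
  | zero =>
      intro t ht
      obtain ⟨s, hs1, hs2⟩ := hT.2.2 t ht
      exact ⟨s, hs1, hs2, Nat.zero_le _⟩
  | succ N ih =>
      intro t ht
      obtain ⟨s, hs1, hs2, hs3⟩ := ih t ht
      obtain ⟨s', h1', h2', h3'⟩ := ih (s ++ [false]) (split_mem hs2 false)
      refine ⟨s', hs1.trans ((List.prefix_append _ _).trans h1'), h2', ?_⟩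
      have h4 := h1'.length_le
      simp at h4
      omega

lemma splitA (T : Set (List Bool)) (hT : PerfectTree T) (t : List Bool) (N : ℕ) :
    ∃ s, splitNode T s ∧ N ≤ s.length ∧ (t ∈ T → t <+: s) := by
  by_cases ht : t ∈ T
  · obtain ⟨s, h1, h2, h3⟩ := exists_split_ge T hT N t ht
    exact ⟨s, h2, h3, fun _ => h1⟩
  · have hnil : ([] : List Bool) ∈ T := by
      obtain ⟨u, hu⟩ := hT.1
      exact hT.2.1 [] u hu List.nil_prefix
    obtain ⟨s, h1, h2, h3⟩ := exists_split_ge T hT N [] hnil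
    exact ⟨s, h2, h3, fun h => absurd h ht⟩

noncomputable def F (T : Set (List Bool)) (hT : PerfectTree T) : ℕ → List Bool
  | 0 => (splitA T hT [] 0).choose
  | (n+1) => (splitA T hT (F T hT (n/2) ++ [decide ((n+1) % 2 = 0)])
      ((F T hT n).length + 1)).choose
decreasing_by all_goals omega

variable (T : Set (List Bool)) (hT : PerfectTree T)

lemma F_split : ∀ n, splitNode T (F T hT n) := by
  intro n
  cases n with
  | zero => rw [F]; exact (splitA T hT [] 0).choose_spec.1
  | succ n => rw [F]; exact (splitA T hT _ _).choose_spec.1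

lemma F_len_succ (n : ℕ) : (F T hT n).length < (F T hT (n+1)).length := by
  conv_rhs => rw [F]
  exact (splitA T hT _ _).choose_spec.2.1

lemma F_step (n : ℕ) :
    F T hT (n/2) ++ [decide ((n+1) % 2 = 0)] <+: F T hT (n+1) := by
  conv_rhs => rw [F]
  exact (splitA T hT _ _).choose_spec.2.2 (split_mem (F_split T hT (n/2)) _)

lemma F_mono : ∀ {m n : ℕ}, m ≤ n → (F T hT m).length ≤ (F T hT n).length := by
  intro m n h
  induction n with
  | zero =>
      have hm : m = 0 := by omega
      subst hm; exact le_refl _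
  | succ n ih =>
      rcases Nat.lt_or_ge m (n+1) with h1 | h1
      · have h2 := F_len_succ T hT n
        have h3 := ih (by omega)
        omega
      · have hm : m = n + 1 := by omega
        subst hm; exact le_refl _

lemma F_strict {m n : ℕ} (h : m < n) : (F T hT m).length < (F T hT n).length := by
  have h1 : m + 1 ≤ n := h
  have h2 := F_mono T hT h1
  have h3 := F_len_succ T hT m
  omega

lemma F_child (a : ℕ) (i : Bool) :
    F T hT a ++ [i] <+: F T hT (2*a + 1 + cond i 1 0) := by
  cases i
  · have h := F_step T hT (2*a)
    have e1 : 2*a/2 = a := by omega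
    have e2 : decide ((2*a+1) % 2 = 0) = false := by
      apply decide_eq_false; omega
    rw [e1, e2] at h
    have e3 : 2*a + 1 + cond false 1 0 = 2*a + 1 := by simp
    rw [e3]
    exact h
  · have h := F_step T hT (2*a+1)
    have e1 : (2*a+1)/2 = a := by omega
    have e2 : decide ((2*a+1+1) % 2 = 0) = true := by
      apply decide_eq_true; omega
    rw [e1, e2] at h
    have e3 : 2*a + 1 + cond true 1 0 = 2*a + 1 + 1 := by simp
    rw [e3]
    exact h

lemma g_prefix_F : ∀ n m, g m <+: g n → F T hT m <+: F T hT n := by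
  intro n
  induction n using Nat.strong_induction_on with
  | _ n ih =>
    intro m h
    by_cases hmn : m = n
    · subst hmn; exact List.prefix_refl _
    have hne : g m ≠ g n := fun e => hmn (g_inj e)
    match n with
    | 0 =>
        exfalso
        have : g m = [] := by
          have := h.length_le
          rw [g_len_zero] at this
          exact List.eq_nil_of_length_eq_zero (by omega)
        exact hmn (g_inj (by rw [this, g]))
    | (n+1) =>
        have hlen : (g m).length < (g (n+1)).length :=
          lt_of_le_of_ne h.length_le (fun e => hne (h.eq_of_length e))
        rw [g_len_succ] at hlen
        have hp : g m <+: g (n/2) := by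
          apply List.prefix_of_prefix_length_le h _ (by omega)
          rw [g_succ]
          exact List.prefix_append _ _
        have h1 := ih (n/2) (by omega) m hp
        refine h1.trans ?_
        exact (List.prefix_append _ _).trans (F_step T hT n)

lemma F_prefix_g : ∀ n m, F T hT m <+: F T hT n → g m <+: g n := by
  intro n
  induction n using Nat.strong_induction_on with
  | _ n ih =>
    intro m h
    by_cases hmn : m = n
    · subst hmn; exact List.prefix_refl _
    have hmlt : m < n := by
      rcases lt_trichotomy m n with h1 | h1 | h1
      · exact h1
      · exact absurd h1 hmn
      · exact absurd h.length_le (by have := F_strict T hT h1; omega)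
    have hlenF : (F T hT m).length < (F T hT n).length := F_strict T hT hmlt
    match n, hmlt with
    | (n+1), _ =>
        have hstep := F_step T hT n
        rcases le_or_gt (F T hT m).length (F T hT (n/2)).length with hle | hlt2
        · have h1 : F T hT m <+: F T hT (n/2) :=
            List.prefix_of_prefix_length_le h
              ((List.prefix_append _ _).trans hstep) hle
          have h2 := ih (n/2) (by omega) m h1
          rw [g_succ]
          exact h2.trans (List.prefix_append _ _)
        · exfalso
          have hpb : F T hT (n/2) ++ [decide ((n+1) % 2 = 0)] <+: F T hT m :=
            List.prefix_of_prefix_length_le hstep h (by simp; omega)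
          have hpm : F T hT (n/2) <+: F T hT m :=
            (List.prefix_append _ _).trans hpb
          have hgpm : g (n/2) <+: g m := ih m (by omega) (n/2) hpm
          have hpnem : n/2 ≠ m := by
            intro e; rw [e] at hlt2; exact absurd hlt2 (lt_irrefl _)
          obtain ⟨i, hi⟩ := prefix_snoc_of_proper hgpm
            (fun e => hpnem (g_inj e))
          have h1 : F T hT (2*(n/2)+1+cond i 1 0) <+: F T hT m := by
            apply g_prefix_F
            rw [g_child]
            exact hi
          have h2 : F T hT (n/2) ++ [i] <+: F T hT m :=
            (F_child T hT (n/2) i).trans h1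
          have hib : i = decide ((n+1) % 2 = 0) := snoc_prefix_unique h2 hpb
          rw [hib, child_eq] at h1
          have := h1.length_le
          omega

/-! ### The good subtree -/

def Tg : Set (List Bool) := {u | ∃ n, u <+: F T hT n}

lemma split_F (n : ℕ) : splitNode (Tg T hT) (F T hT n) := by
  refine ⟨⟨n, List.prefix_refl _⟩, ⟨2*n+1, ?_⟩, ⟨2*n+2, ?_⟩⟩
  · have h := F_child T hT n false
    simpa using h
  · have h := F_child T hT n true
    have e : 2*n + 1 + cond true 1 0 = 2*n+2 := by simp
    rw [e] at h
    exact h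

lemma exists_lcp : ∀ a b : List Bool, ∃ w, w <+: a ∧ w <+: b ∧
    (w = a ∨ w = b ∨ ∃ x y, x ≠ y ∧ w ++ [x] <+: a ∧ w ++ [y] <+: b) := by
  intro a
  induction a with
  | nil =>
      intro b
      exact ⟨[], List.nil_prefix, List.nil_prefix, Or.inl rfl⟩
  | cons x a ih =>
      intro b
      cases b with
      | nil =>
          exact ⟨[], List.nil_prefix, List.nil_prefix, Or.inr (Or.inl rfl)⟩
      | cons y b =>
          by_cases hxy : x = y
          · subst hxy
            obtain ⟨w, h1, h2, h3⟩ := ih b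
            refine ⟨x :: w, List.cons_prefix_cons.mpr ⟨rfl, h1⟩,
              List.cons_prefix_cons.mpr ⟨rfl, h2⟩, ?_⟩
            rcases h3 with h3 | h3 | ⟨x', y', hne, hx', hy'⟩
            · exact Or.inl (by rw [h3])
            · exact Or.inr (Or.inl (by rw [h3]))
            · refine Or.inr (Or.inr ⟨x', y', hne, ?_, ?_⟩)
              · have e : (x :: w) ++ [x'] = x :: (w ++ [x']) := by simp
                rw [e]
                exact List.cons_prefix_cons.mpr ⟨rfl, hx'⟩
              · have e : (x :: w) ++ [y'] = x :: (w ++ [y']) := by simp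
                rw [e]
                exact List.cons_prefix_cons.mpr ⟨rfl, hy'⟩
          · exact ⟨[], List.nil_prefix, List.nil_prefix,
              Or.inr (Or.inr ⟨x, y, hxy, by simp, by simp⟩)⟩

lemma g_prefix_surj : ∀ n w, w <+: g n → ∃ m, g m = w := by
  intro n
  induction n using Nat.strong_induction_on with
  | _ n ih =>
    intro w h
    by_cases hw : w = g n
    · exact ⟨n, hw.symm⟩
    match n with
    | 0 =>
        refine ⟨0, ?_⟩
        have hlen := h.length_le
        rw [g_len_zero] at hlen
        have hnil : w = [] := List.eq_nil_of_length_eq_zero (by omega)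
        rw [hnil, g]
    | (n+1) =>
        have hlen : w.length < (g (n+1)).length :=
          lt_of_le_of_ne h.length_le (fun e => hw (h.eq_of_length e))
        rw [g_len_succ] at hlen
        apply ih (n/2) (by omega)
        apply List.prefix_of_prefix_length_le h _ (by omega)
        rw [g_succ]
        exact List.prefix_append _ _

lemma split_eq_F {u : List Bool} (h : splitNode (Tg T hT) u) :
    ∃ n, u = F T hT n := by
  obtain ⟨⟨a, hua⟩, ⟨m, hm⟩, ⟨n, hn⟩⟩ := h
  have hum : u <+: F T hT m := (List.prefix_append _ _).trans hm
  have hun : u <+: F T hT n := (List.prefix_append _ _).trans hn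
  obtain ⟨w, hwm, hwn, hcase⟩ := exists_lcp (g m) (g n)
  rcases hcase with hc | hc | ⟨x, y, hxy, hx, hy⟩
  · -- g m <+: g n
    exfalso
    have hFmn : F T hT m <+: F T hT n := g_prefix_F T hT n m (hc ▸ hwn)
    have h1 : u ++ [false] <+: F T hT n := hm.trans hFmn
    have := snoc_prefix_unique h1 hn
    simp at this
  · exfalso
    have hFnm : F T hT n <+: F T hT m := g_prefix_F T hT m n (hc ▸ hwm)
    have h1 : u ++ [true] <+: F T hT m := hn.trans hFnm
    have := snoc_prefix_unique hm h1
    simp at this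
  · obtain ⟨j, rfl⟩ := g_prefix_surj m w hwm
    have hjxm : F T hT j ++ [x] <+: F T hT m := by
      refine (F_child T hT j x).trans (g_prefix_F T hT m _ ?_)
      rw [g_child]; exact hx
    have hjyn : F T hT j ++ [y] <+: F T hT n := by
      refine (F_child T hT j y).trans (g_prefix_F T hT n _ ?_)
      rw [g_child]; exact hy
    have hjm : F T hT j <+: F T hT m := (List.prefix_append _ _).trans hjxm
    have hjn : F T hT j <+: F T hT n := (List.prefix_append _ _).trans hjyn
    rcases lt_trichotomy u.length (F T hT j).length with hlt | heq | hgt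
    · exfalso
      have h1 : u ++ [false] <+: F T hT j :=
        List.prefix_of_prefix_length_le hm hjm (by simp; omega)
      have h2 : u ++ [true] <+: F T hT j :=
        List.prefix_of_prefix_length_le hn hjn (by simp; omega)
      have := snoc_prefix_unique h1 h2
      simp at this
    · exact ⟨j, List.prefix_of_prefix_length_le hum hjm (by omega) |>.eq_of_length heq⟩
    · exfalso
      have h1 : F T hT j ++ [x] <+: u :=
        List.prefix_of_prefix_length_le hjxm hum (by simp; omega)
      have h2 : F T hT j ++ [y] <+: u :=
        List.prefix_of_prefix_length_le hjyn hun (by simp; omega)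
      exact hxy (snoc_prefix_unique h1 h2)

open Classical in
lemma trace_F : ∀ n, splitTrace (Tg T hT) (F T hT n) = g n := by
  intro n
  induction n using Nat.strong_induction_on with
  | _ n ih =>
    -- a prefix of F n that is a splitting node of Tg must be some F m with g m <+: g n
    have key : ∀ k, k < (F T hT n).length →
        splitNode (Tg T hT) ((F T hT n).take k) →
        ∃ m, (F T hT n).take k = F T hT m ∧ g m <+: g n ∧ m ≠ n := by
      intro k hk hsp
      obtain ⟨m, hmeq⟩ := split_eq_F T hT hsp
      have hpre : F T hT m <+: F T hT n := hmeq ▸ List.take_prefix _ _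
      have hlen : (F T hT m).length = k := by
        rw [← hmeq, List.length_take]
        omega
      refine ⟨m, hmeq, F_prefix_g T hT n m hpre, ?_⟩
      intro e
      rw [e] at hlen
      omega
    match n with
    | 0 =>
        rw [g]
        unfold splitTrace
        have hfil : (List.range (F T hT 0).length).filter
            (fun k => decide (splitNode (Tg T hT) ((F T hT 0).take k))) = [] := by
          rw [List.filter_eq_nil_iff]
          intro k hk
          simp only [List.mem_range] at hk
          simp only [decide_eq_true_eq]
          intro hsp
          obtain ⟨m, _, hg, hne⟩ := key k hk hsp
          apply hne
          apply g_inj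
          have : (g m).length = 0 := by
            have := hg.length_le
            rw [g_len_zero] at this
            omega
          rw [List.eq_nil_of_length_eq_zero this, g]
        rw [hfil]
        rfl
    | (n+1) =>
        set p := n / 2 with hp
        set b := decide ((n+1) % 2 = 0) with hb
        set v := F T hT (n+1) with hv
        set w := F T hT p with hw
        set L := w.length with hL
        have hstep : w ++ [b] <+: v := F_step T hT n
        have hwv : w <+: v := (List.prefix_append _ _).trans hstep
        have hLv : L + 1 ≤ v.length := by
          have := hstep.length_le
          simp at this
          omega
        have htake : ∀ k, k ≤ L → v.take k = w.take k :=
          fun k hk => prefix_take_eq hwv hk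
        have hkey2 : ∀ k, k < v.length →
            (decide (splitNode (Tg T hT) (v.take k)) = true) → k < L + 1 := by
          intro k hk hdec
          rw [decide_eq_true_eq] at hdec
          obtain ⟨m, hmeq, hg, hne⟩ := key k hk hdec
          have hgp : g m <+: g p := by
            apply List.prefix_of_prefix_length_le hg _ _
            · rw [g_succ]; exact List.prefix_append _ _
            · have h1 : (g m).length < (g (n+1)).length :=
                lt_of_le_of_ne hg.length_le (fun e => hne (g_inj (hg.eq_of_length e)))
              rw [g_len_succ, ← hp] at h1
              omega
          have hFmp : F T hT m <+: w := g_prefix_F T hT p m hgp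
          have : (F T hT m).length ≤ L := hFmp.length_le
          have hlenk : (F T hT m).length = k := by
            rw [← hmeq, List.length_take]; omega
          omega
        unfold splitTrace
        rw [show (List.range v.length) = List.range v.length from rfl]
        rw [filter_range_shrink _ (by omega) hkey2]
        rw [List.range_succ, List.filter_append]
        have hsplitL : decide (splitNode (Tg T hT) (v.take L)) = true := by
          rw [decide_eq_true_eq]
          have : v.take L = w := by
            rw [htake L (le_refl _)]
            simp [hL]
          rw [this]
          exact split_F T hT p
        rw [List.filter_cons, hsplitL]
        simp only [List.filter_nil]
        rw [List.filter_congr (fun k hk => by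
          simp only [List.mem_range] at hk
          rw [htake k (by omega)])]
        rw [List.map_append]
        have hgetL : v.getD L false = b := snoc_prefix_getD hstep
        have hmapfil : ((List.range L).filter
              (fun k => decide (splitNode (Tg T hT) (w.take k)))).map
              (fun k => v.getD k false)
            = ((List.range L).filter
              (fun k => decide (splitNode (Tg T hT) (w.take k)))).map
              (fun k => w.getD k false) := by
          apply List.map_congr_left
          intro k hk
          have hkL : k < L := by
            have := List.mem_range.mp (List.mem_filter.mp hk).1
            exact this
          exact prefix_getD hwv hkL
        rw [hmapfil]
        have hihp : ((List.range L).filter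
              (fun k => decide (splitNode (Tg T hT) (w.take k)))).map
              (fun k => w.getD k false) = g p := by
          have := ih p (by omega)
          unfold splitTrace at this
          exact this
        rw [hihp, g_succ]
        rw [if_pos trivial, List.map_cons, List.map_nil, hgetL, ← hp, ← hb]

omit hT in
theorem main (hT : PerfectTree T) :
    ∃ T' : Set (List Bool), T' ⊆ T ∧ PerfectTree T' ∧ GoodTree T' := by
  refine ⟨Tg T hT, ?_, ⟨⟨[], 0, List.nil_prefix⟩, ?_, ?_⟩, ?_⟩
  · rintro u ⟨n, hn⟩
    exact hT.2.1 u (F T hT n) (F_split T hT n).1 hn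
  · rintro s t ⟨n, hn⟩ hst
    exact ⟨n, hst.trans hn⟩
  · rintro t ⟨n, hn⟩
    exact ⟨F T hT n, hn, split_F T hT n⟩
  · intro s t hs ht hpre
    obtain ⟨m, rfl⟩ := split_eq_F T hT hs
    obtain ⟨n, rfl⟩ := split_eq_F T hT ht
    unfold preceq at hpre
    rw [trace_F, trace_F] at hpre
    have hmn : m ≤ n := by
      rcases hpre with h1 | ⟨h1, h2⟩
      · by_contra hc
        have := g_len_mono m n (by omega)
        omega
      · rcases h2 with h2 | h2
        · exact le_of_eq (g_inj h2)
        · by_contra hc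
          exact lex_asymm h2 (g_lex m n (by omega) (by omega))
    exact F_mono T hT hmn

end GoodAux

/-- every perfect tree contains a good perfect subtree. -/
theorem exists_good_perfect_subtree (T : Set (List Bool)) (hT : PerfectTree T) :
    ∃ T' : Set (List Bool), T' ⊆ T ∧ PerfectTree T' ∧ GoodTree T' := GoodAux.main T hT
end

section
/- If A is a maximal antichain in amoeba-Silver AV, (p,T) ∈ AV, and T* ⊆ T is such that (p,T*) ∈ AV and for every condition (q,S) ≤ (p,T*): if (q,S) belongs to the open dense set D_A = {(q,S) : ∃a ∈ A, (q,S) ≤ a} then also (q, T*↓q) ∈ D_A, then only countably many elements of A are compatible with (p,T*). -/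
/-- The height of a finite tree: the supremum of the lengths of its nodes. -/
noncomputable def ht (p : Set (List Bool)) : ℕ := sSup {n | ∃ t ∈ p, t.length = n}

/-- Conditions of amoeba-Silver `AV`: pairs `(p,T)` with `T` a Silver tree and
`p = T|n` for some `n`. -/
def memAV (c : Set (List Bool) × Set (List Bool)) : Prop :=
  SilverTree c.2 ∧ ∃ n : ℕ, c.1 = restrict c.2 n

/-- The order of `AV`: `(p',T') ≤ (p,T)` iff `T' ⊆ T` and `p'↾ht(p) = p`. -/
noncomputable def leAV (c d : Set (List Bool) × Set (List Bool)) : Prop :=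
  c.2 ⊆ d.2 ∧ restrict c.1 (ht d.1) = d.1

/-- `T↓q`: the nodes of `T` comparable with some terminal node of `q`. -/
def Tdown (T q : Set (List Bool)) : Set (List Bool) :=
  {t ∈ T | ∃ s ∈ Term q, comparable s t}

/-- Compatibility of `AV`-conditions. -/
noncomputable def compatAV (a b : Set (List Bool) × Set (List Bool)) : Prop :=
  ∃ c, memAV c ∧ leAV c a ∧ leAV c b

/-- Any `q = restrict S n` with `S` a tree satisfies `S ⊆ Tdown Tstar q`
whenever `S ⊆ Tstar`. -/
lemma subset_Tdown_aux {S Tstar : Set (List Bool)} (hST : S ⊆ Tstar) (hTree : IsTree S)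
    {n : ℕ} : S ⊆ Tdown Tstar (restrict S n) := by
  intro t ht
  refine ⟨hST ht, ?_⟩
  set q : Set (List Bool) := restrict S n with hq
  rcases le_or_gt t.length n with hlen | hlen
  · -- t itself lies in q; extend it to a maximal (terminal) node of q
    have htq : t ∈ q := ⟨ht, hlen⟩
    have hfin : ({u ∈ q | t <+: u} : Set (List Bool)).Finite := by
      apply (List.finite_length_le Bool n).subset
      rintro u ⟨⟨-, hu⟩, -⟩; exact hu
    obtain ⟨u, hu, hmax⟩ := Set.Finite.exists_maximalFor List.length _ hfin ⟨t, htq, List.prefix_refl t⟩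
    refine ⟨u, ⟨hu.1, ?_⟩, Or.inr hu.2⟩
    intro v hv huv
    have hvmem : v ∈ {u ∈ q | t <+: u} := ⟨hv, hu.2.trans huv⟩
    exact huv.eq_of_length (le_antisymm huv.length_le (hmax hvmem huv.length_le))
  · -- take the length-n prefix of t; it is terminal in q
    have hpre : t.take n <+: t := List.take_prefix n t
    have hmem : t.take n ∈ S := hTree _ _ ht hpre
    have hlen' : (t.take n).length = n := by
      simp [List.length_take, Nat.min_eq_left hlen.le]
    refine ⟨t.take n, ⟨⟨hmem, hlen'.le⟩, ?_⟩, Or.inl hpre⟩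
    intro v hv hvp
    exact hvp.eq_of_length (le_antisymm hvp.length_le (by rw [hlen']; exact hv.2))

/-- if `A` is a maximal antichain of `AV`, `(p,T) ∈ AV`, and
`T* ⊆ T` with `(p,T*) ∈ AV` is such that every `(q,S) ≤ (p,T*)` lying in the
open dense set `D_A` associated with `A` satisfies `(q,T*↓q) ∈ D_A`, then only
countably many elements of `A` are compatible with `(p,T*)`. -/
theorem av_countably_many_compatible
    (A : Set (Set (List Bool) × Set (List Bool)))
    (hA : ∀ a ∈ A, memAV a)
    (hanti : ∀ a ∈ A, ∀ b ∈ A, a ≠ b → ¬ compatAV a b)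
    (hmax : ∀ c, memAV c → ∃ a ∈ A, compatAV c a)
    (p T Tstar : Set (List Bool))
    (hpT : memAV (p, T)) (hpTs : memAV (p, Tstar)) (hsub : Tstar ⊆ T)
    (hkey : ∀ q S : Set (List Bool), memAV (q, S) → leAV (q, S) (p, Tstar) →
      (∃ a ∈ A, leAV (q, S) a) →
      memAV (q, Tdown Tstar q) ∧ ∃ a ∈ A, leAV (q, Tdown Tstar q) a) :
    {a ∈ A | compatAV a (p, Tstar)}.Countable := by
  classical
  have core : ∀ a ∈ A, compatAV a (p, Tstar) → ∃ q : Set (List Bool),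
      q.Finite ∧ memAV (q, Tdown Tstar q) ∧ leAV (q, Tdown Tstar q) a := by
    rintro a ha ⟨c, hc, hca, hcp⟩
    obtain ⟨q, S⟩ := c
    obtain ⟨hSilver, n, hqn⟩ := hc
    have hqn2 : q = restrict S n := hqn
    have hST : S ⊆ Tstar := hcp.1
    have hTree : IsTree S := hSilver.1.2.1
    have hSsub : S ⊆ Tdown Tstar q := by
      rw [hqn2]; exact subset_Tdown_aux hST hTree
    obtain ⟨hmem, a', ha', hle'⟩ := hkey q S ⟨hSilver, n, hqn⟩ hcp ⟨a, ha, hca⟩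
    have hEq : a' = a := by
      by_contra hne
      exact hanti a ha a' ha' (Ne.symm hne)
        ⟨(q, S), ⟨hSilver, n, hqn⟩, hca, fun t htS => hle'.1 (hSsub htS), hle'.2⟩
    subst hEq
    refine ⟨q, ?_, hmem, hle'⟩
    rw [hqn2]; exact (List.finite_length_le Bool n).subset (fun t ht => ht.2)
  set s := {a ∈ A | compatAV a (p, Tstar)} with hs
  have core' : ∀ a : s, ∃ q : Finset (List Bool),
      memAV ((q : Set (List Bool)), Tdown Tstar (q : Set (List Bool))) ∧
      leAV ((q : Set (List Bool)), Tdown Tstar (q : Set (List Bool))) (a : _) := by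
    rintro ⟨a, ha, hcomp⟩
    obtain ⟨q, hqf, hmem, hle⟩ := core a ha hcomp
    exact ⟨hqf.toFinset, by rwa [Set.Finite.coe_toFinset], by rwa [Set.Finite.coe_toFinset]⟩
  choose F hF1 hF2 using core'
  have hinj : Function.Injective F := by
    intro a b hab
    rw [Subtype.ext_iff]
    by_contra hne
    exact hanti _ a.2.1 _ b.2.1 hne
      ⟨((F a : Set (List Bool)), Tdown Tstar (F a : Set (List Bool))), hF1 a, hF2 a,
        by rw [hab]; exact hF2 b⟩
  exact Set.countable_coe_iff.mp hinj.countable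
end
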